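/- Let A be an abelian category with enough projectives and enough injectives. Let C be a subcategory such that Ext²(C, X) = 0 for all C ∈ C and all X ∈ A, and Ext¹(C, C) = 0 (C is partial tilting). Then C is τ-rigid, i.e. Ext¹(C, Fac C) = 0. -/

import Mathlib

open CategoryTheory Limits Opposite

noncomputable section

universe v u

variable {C : Type u} [Category.{v} C] [Abelian C] [EnoughProjectives C]

attribute [local instance] CategoryTheory.Abelian.hasFiniteBiproducts

/-- `Fac M`: quotients of finite direct sums of objects of `M`. -/
def Fac (M : Set C) : Set C :=
  {X | ∃ (n : ℕ) (f : Fin n → C), (∀ i, f i ∈ M) ∧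
    haveI : HasBiproductsOfShape (Fin n) C := HasFiniteBiproducts.out n
    ∃ e : (⨁ f) ⟶ X, Epi e}

/-- Vanishing of `Ext¹(X, Y)`. -/
def ext1Zero (X Y : C) : Prop := Subsingleton (((Ext ℤ C 1).obj (op X)).obj Y)

/-- Vanishing of `Ext²(X, Y)`. -/
def ext2Zero (X Y : C) : Prop := Subsingleton (((Ext ℤ C 2).obj (op X)).obj Y)

/-- `v : P ⟶ V₀` is a left `M`-approximation. -/
def IsLeftApprox (M : Set C) {P V₀ : C} (v : P ⟶ V₀) : Prop :=
  ∀ V' ∈ M, ∀ h : P ⟶ V', ∃ t : V₀ ⟶ V', v ≫ t = h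

/-- `u : U₀ ⟶ X` is a right `M`-approximation. -/
def IsRightApprox (M : Set C) {U₀ X : C} (u : U₀ ⟶ X) : Prop :=
  ∀ M' ∈ M, ∀ h : M' ⟶ X, ∃ t : M' ⟶ U₀, t ≫ u = h

/-- The Ext-projective objects of `S`. -/
def ExtProj (S : Set C) : Set C := {D ∈ S | ∀ Z ∈ S, ext1Zero D Z}

/-- `M` is τ-rigid: `Ext¹(M, Fac M) = 0`. -/
def TauRigid (M : Set C) : Prop := ∀ M₀ ∈ M, ∀ X ∈ Fac M, ext1Zero M₀ X

/-- `P` admits an exact sequence `P ⟶ Ma ⟶ Mb ⟶ 0` with `Ma, Mb ∈ M` and the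
first map a left `M`-approximation. -/
def HasApproxSeq (M : Set C) (P : C) : Prop :=
  ∃ M₀ ∈ M, ∃ M₁ ∈ M, ∃ (m : P ⟶ M₀) (g : M₀ ⟶ M₁) (w : m ≫ g = 0),
    (ShortComplex.mk m g w).Exact ∧ Epi g ∧ IsLeftApprox M m

/-- `M` is a support τ-tilting subcategory. -/
def SupportTauTilting (M : Set C) : Prop :=
  TauRigid M ∧ ∀ P : C, Projective P → HasApproxSeq M P

/-- `0 ⟶ X ⟶ Y ⟶ Z ⟶ 0` is a short exact sequence. -/
def SES {X Y Z : C} (f : X ⟶ Y) (g : Y ⟶ Z) : Prop :=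
  ∃ w : f ≫ g = 0, (ShortComplex.mk f g w).Exact ∧ Mono f ∧ Epi g

/-- `U` is hereditary: `Ext²(U, −) = 0`. -/
def Hereditary1 (U : Set C) : Prop := ∀ U₀ ∈ U, ∀ X : C, ext2Zero U₀ X

/-- `U` is partial tilting. -/
def PartialTilting (U : Set C) : Prop :=
  Hereditary1 U ∧ ∀ U₀ ∈ U, ∀ U₁ ∈ U, ext1Zero U₀ U₁

/-- `U` is tilting. -/
def Tilting (U : Set C) : Prop :=
  PartialTilting U ∧ ∀ P : C, Projective P →
    ∃ Ua ∈ U, ∃ Ub ∈ U, ∃ (i : P ⟶ Ua) (p : Ua ⟶ Ub), SES i p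

/-- `U^⊥₁ = {X | Ext¹(U, X) = 0}`. -/
def Perp1 (U : Set C) : Set C := {X | ∀ U₀ ∈ U, ext1Zero U₀ X}

/-- `M` is closed under finite direct sums and direct summands. -/
def AdditivelyClosed (M : Set C) : Prop :=
  (∀ (n : ℕ) (f : Fin n → C), (∀ i, f i ∈ M) →
    haveI : HasBiproductsOfShape (Fin n) C := HasFiniteBiproducts.out n
    (⨁ f) ∈ M) ∧
  (∀ M₀ ∈ M, ∀ (X : C) (r : M₀ ⟶ X) (s : X ⟶ M₀), s ≫ r = 𝟙 X → X ∈ M)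

/-- The additive closure of a class of objects: direct summands of finite
direct sums of its objects. -/
def AddClosure (X : Set C) : Set C :=
  {Y | ∃ (n : ℕ) (f : Fin n → C), (∀ i, f i ∈ X) ∧
    haveI : HasBiproductsOfShape (Fin n) C := HasFiniteBiproducts.out n
    ∃ (r : (⨁ f) ⟶ Y) (s : Y ⟶ ⨁ f), s ≫ r = 𝟙 Y}

/-- Characterization of `Ext^{n+1}(W, Y) = 0` via a projective resolution of `W`. -/
lemma extSucc_char_aux (W Y : C) (P : ProjectiveResolution W) (n : ℕ) :
    Subsingleton (((Ext ℤ C (n + 1)).obj (op W)).obj Y) ↔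
      ∀ f : P.complex.X (n + 1) ⟶ Y, P.complex.d (n + 2) (n + 1) ≫ f = 0 →
        ∃ g : P.complex.X n ⟶ Y, P.complex.d (n + 1) n ≫ g = f := by
  have hsub : Subsingleton (((Ext ℤ C (n + 1)).obj (op W)).obj Y) ↔
      Subsingleton ((P.complex.linearYonedaObj ℤ Y).homology (n + 1)) :=
    Equiv.subsingleton_congr ((forget (ModuleCat ℤ)).mapIso (P.isoExt (n + 1) Y)).toEquiv
  rw [hsub]
  have hz : Subsingleton ((P.complex.linearYonedaObj ℤ Y).homology (n + 1)) ↔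
      IsZero ((P.complex.linearYonedaObj ℤ Y).homology (n + 1)) := by
    constructor
    · intro h; exact ModuleCat.isZero_of_subsingleton _
    · intro h
      refine ⟨fun a b => ?_⟩
      have h0 : (𝟙 ((P.complex.linearYonedaObj ℤ Y).homology (n + 1))) = 0 :=
        h.eq_of_src _ _
      calc a = (𝟙 ((P.complex.linearYonedaObj ℤ Y).homology (n + 1))) a := rfl
        _ = (0 : _ →ₗ[ℤ] _) a := by rw [h0]; rfl
        _ = (𝟙 ((P.complex.linearYonedaObj ℤ Y).homology (n + 1))) b := by
              rw [h0]; rfl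
        _ = b := rfl
  rw [hz, ← HomologicalComplex.exactAt_iff_isZero_homology,
    (P.complex.linearYonedaObj ℤ Y).exactAt_iff' n (n + 1) (n + 2)
      (by simp) (by simp),
    ShortComplex.moduleCat_exact_iff]
  constructor
  · intro h f hf
    obtain ⟨g, hg⟩ := h f (by exact hf)
    exact ⟨g, by exact hg⟩
  · intro h f hf
    obtain ⟨g, hg⟩ := h f (by exact hf)
    exact ⟨g, by exact hg⟩

theorem stmt9 [EnoughInjectives C] (U : Set C)
    (h2 : Hereditary1 U) (h1 : ∀ U₀ ∈ U, ∀ U₁ ∈ U, ext1Zero U₀ U₁) :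
    TauRigid U := by
  intro U₀ hU₀ X hX
  obtain ⟨n, f, hfU, e, he⟩ := hX
  haveI : HasBiproductsOfShape (Fin n) C := HasFiniteBiproducts.out n
  set P := ProjectiveResolution.of U₀ with hP
  set Q := P.complex with hQ
  rw [ext1Zero, extSucc_char_aux U₀ X P 0]
  intro f1 hf1
  -- Ext¹(U₀, ⨁ f) = 0, expressed as a factorization property
  have hExtB : ∀ φ : Q.X 1 ⟶ ⨁ f, Q.d 2 1 ≫ φ = 0 →
      ∃ ψ : Q.X 0 ⟶ ⨁ f, Q.d 1 0 ≫ ψ = φ := by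
    intro φ hφ
    have comp : ∀ i, ∃ g : Q.X 0 ⟶ f i, Q.d 1 0 ≫ g = φ ≫ biproduct.π f i := by
      intro i
      exact (extSucc_char_aux U₀ (f i) P 0).mp (h1 U₀ hU₀ (f i) (hfU i))
        (φ ≫ biproduct.π f i) (by rw [← Category.assoc, hφ, zero_comp])
    choose g hg using comp
    refine ⟨biproduct.lift g, ?_⟩
    apply biproduct.hom_ext
    intro i
    simp [hg i]
  -- lift the cocycle along the epi e
  haveI : Projective (Q.X 1) := P.projective 1
  set f' : Q.X 1 ⟶ ⨁ f := Projective.factorThru f1 e with hf'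
  have hf'e : f' ≫ e = f1 := Projective.factorThru_comp f1 e
  -- the obstruction lands in the kernel
  have hker : (Q.d 2 1 ≫ f') ≫ e = 0 := by
    rw [Category.assoc, hf'e, hf1]
  set g : Q.X 2 ⟶ kernel e := kernel.lift e (Q.d 2 1 ≫ f') hker with hg
  have hgι : g ≫ kernel.ι e = Q.d 2 1 ≫ f' := kernel.lift_ι e _ hker
  have hgcycle : Q.d 3 2 ≫ g = 0 := by
    rw [← cancel_mono (kernel.ι e), Category.assoc, hgι, zero_comp,
      ← Category.assoc, Q.d_comp_d 3 2 1, zero_comp]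
  -- kill the obstruction using Ext²(U₀, ker e) = 0
  obtain ⟨h, hh⟩ := (extSucc_char_aux U₀ (kernel e) P 1).mp
    (h2 U₀ hU₀ (kernel e)) g hgcycle
  set f'' : Q.X 1 ⟶ ⨁ f := f' - h ≫ kernel.ι e with hf''
  have hcycle : Q.d 2 1 ≫ f'' = 0 := by
    rw [hf'', Preadditive.comp_sub, ← Category.assoc, hh, hgι, sub_self]
  obtain ⟨k, hk⟩ := hExtB f'' hcycle
  refine ⟨k ≫ e, ?_⟩
  rw [← Category.assoc, hk, hf'', Preadditive.sub_comp, Category.assoc,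
    kernel.condition, comp_zero, sub_zero, hf'e]
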